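/- Let μ : ℕ → (0,∞). Define Δ_r(s) = μ(r+s)/μ(r) − μ(r+s−1)/μ(r−1) for integers r ≥ 1, s ≥ 0, and define H_α(β,k) for α ≥ 1, 1 ≤ k ≤ β by the recursion H_α(β,β) = Δ_α(β)·μ(0) for β ≥ 1, and H_α(β,k) = Δ_α(k)·μ(β−k) + Σ_{l=1}^{β−k} Δ_α(l)·H_l(β−l,k) for β ≥ 2 and 1 ≤ k ≤ β−1. Then H also satisfies the dual recursion: H_α(β,β) = Δ_α(β)·μ(0) for β ≥ 1, and H_α(β,k) = Δ_α(k)·μ(β−k) + Σ_{l=1}^{β−k} H_α(β−k,l)·Δ_l(k) for β ≥ 2 and 1 ≤ k ≤ β−1. -/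

import Mathlib

noncomputable def Fc (μ : ℕ → ℝ) (Δ : ℕ → ℕ → ℝ) : ℕ → ℕ → ℕ → ℝ
  | α, m, k =>
    Δ α k * μ m + ∑ l ∈ (Finset.Icc 1 m).attach,
      Δ α l * Fc μ Δ l (m - l) k
  termination_by _ m _ => m
  decreasing_by
    have := Finset.mem_Icc.mp l.2; omega

lemma Fc_eq (μ : ℕ → ℝ) (Δ : ℕ → ℕ → ℝ) (α m k : ℕ) :
    Fc μ Δ α m k = Δ α k * μ m + ∑ l ∈ Finset.Icc 1 m, Δ α l * Fc μ Δ l (m - l) k := by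
  rw [Fc, Finset.sum_attach (Finset.Icc 1 m) (fun l => Δ α l * Fc μ Δ l (m - l) k)]

lemma Fc_zero (μ : ℕ → ℝ) (Δ : ℕ → ℕ → ℝ) (α k : ℕ) :
    Fc μ Δ α 0 k = Δ α k * μ 0 := by
  rw [Fc_eq]; simp

lemma sum_ite_trick {f : ℕ → ℝ} {m l : ℕ} (hl : l ∈ Finset.Icc 1 m) :
    ∑ l' ∈ Finset.Icc 1 (m - l), f l'
      = ∑ l' ∈ Finset.Icc 1 m, if l + l' ≤ m then f l' else 0 := by
  rw [Finset.sum_ite, Finset.sum_const_zero, add_zero]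
  apply Finset.sum_congr _ (fun _ _ => rfl)
  rw [Finset.mem_Icc] at hl
  ext x
  simp only [Finset.mem_filter, Finset.mem_Icc]
  omega

/-- The dual recursion for `Fc`. -/
lemma Fc_dual (μ : ℕ → ℝ) (Δ : ℕ → ℕ → ℝ) : ∀ m α k : ℕ,
    Fc μ Δ α m k = Δ α k * μ m + ∑ l ∈ Finset.Icc 1 m, Fc μ Δ α (m - l) l * Δ l k := by
  intro m
  induction m using Nat.strong_induction_on with
  | _ m ih =>
    intro α k
    rw [Fc_eq]
    congr 1
    -- rewrite each summand of the LHS using the IH (or base case)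
    have hL : ∀ l ∈ Finset.Icc 1 m,
        Δ α l * Fc μ Δ l (m - l) k
          = Δ α l * Δ l k * μ (m - l)
            + ∑ l' ∈ Finset.Icc 1 (m - l), Δ α l * (Fc μ Δ l (m - l - l') l' * Δ l' k) := by
      intro l hl
      have hlm := Finset.mem_Icc.mp hl
      have hrec := ih (m - l) (by omega) l k
      rw [hrec, mul_add, Finset.mul_sum, mul_assoc]
    have hR : ∀ l' ∈ Finset.Icc 1 m,
        Fc μ Δ α (m - l') l' * Δ l' k
          = Δ α l' * Δ l' k * μ (m - l')
            + ∑ l ∈ Finset.Icc 1 (m - l'), Δ α l * (Fc μ Δ l (m - l' - l) l' * Δ l' k) := by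
      intro l' hl'
      rw [Fc_eq, add_mul, Finset.sum_mul]
      ring_nf
    rw [Finset.sum_congr rfl hL, Finset.sum_congr rfl hR, Finset.sum_add_distrib,
      Finset.sum_add_distrib]
    congr 1
    -- swap the double sums
    calc ∑ l ∈ Finset.Icc 1 m, ∑ l' ∈ Finset.Icc 1 (m - l),
            Δ α l * (Fc μ Δ l (m - l - l') l' * Δ l' k)
        = ∑ l ∈ Finset.Icc 1 m, ∑ l' ∈ Finset.Icc 1 m,
            (if l + l' ≤ m then Δ α l * (Fc μ Δ l (m - l - l') l' * Δ l' k) else 0) := by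
          exact Finset.sum_congr rfl (fun l hl => sum_ite_trick hl)
      _ = ∑ l' ∈ Finset.Icc 1 m, ∑ l ∈ Finset.Icc 1 m,
            (if l' + l ≤ m then Δ α l * (Fc μ Δ l (m - l' - l) l' * Δ l' k) else 0) := by
          rw [Finset.sum_comm]
          apply Finset.sum_congr rfl; intro l' _
          apply Finset.sum_congr rfl; intro l _
          have h2 : m - l - l' = m - l' - l := by omega
          rw [h2]
          exact if_congr (by omega) rfl rfl
      _ = ∑ l' ∈ Finset.Icc 1 m, ∑ l ∈ Finset.Icc 1 (m - l'),
            Δ α l * (Fc μ Δ l (m - l' - l) l' * Δ l' k) := by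
          exact Finset.sum_congr rfl (fun l' hl' => (sum_ite_trick hl').symm)

/-- the coefficients `H` of a mass-migration target process
satisfy the dual recursion. -/
theorem stmt6
    (μ : ℕ → ℝ) (hμ : ∀ n : ℕ, 0 < μ n)
    (Δ : ℕ → ℕ → ℝ)
    (hΔ : ∀ r s : ℕ, 1 ≤ r →
      Δ r s = μ (r + s) / μ r - μ (r + s - 1) / μ (r - 1))
    (H : ℕ → ℕ → ℕ → ℝ)
    (hHdiag : ∀ α β : ℕ, 1 ≤ α → 1 ≤ β → H α β β = Δ α β * μ 0)
    (hHrec : ∀ α β k : ℕ, 1 ≤ α → 2 ≤ β → 1 ≤ k → k ≤ β - 1 →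
      H α β k = Δ α k * μ (β - k)
        + ∑ l ∈ Finset.Icc 1 (β - k), Δ α l * H l (β - l) k) :
    (∀ α β : ℕ, 1 ≤ α → 1 ≤ β → H α β β = Δ α β * μ 0) ∧
    (∀ α β k : ℕ, 1 ≤ α → 2 ≤ β → 1 ≤ k → k ≤ β - 1 →
      H α β k = Δ α k * μ (β - k)
        + ∑ l ∈ Finset.Icc 1 (β - k), H α (β - k) l * Δ l k) := by
  have key : ∀ m α k : ℕ, 1 ≤ α → 1 ≤ k → H α (m + k) k = Fc μ Δ α m k := by
    intro m
    induction m using Nat.strong_induction_on with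
    | _ m ih =>
      intro α k hα hk
      rcases Nat.eq_zero_or_pos m with hm | hm
      · subst hm
        rw [Fc_zero, Nat.zero_add]
        exact hHdiag α k hα hk
      · have h2 : 2 ≤ m + k := by omega
        have hsub : m + k - k = m := by omega
        rw [hHrec α (m + k) k hα h2 hk (by omega), hsub, Fc_eq]
        congr 1
        apply Finset.sum_congr rfl
        intro l hl
        have hlm := Finset.mem_Icc.mp hl
        have : m + k - l = (m - l) + k := by omega
        rw [this, ih (m - l) (by omega) l k hlm.1 hk]
  refine ⟨hHdiag, ?_⟩
  intro α β k hα hβ hk hkβ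
  have hkβ' : k < β := by omega
  set m := β - k with hm
  have hm1 : 1 ≤ m := by omega
  have hβm : β = m + k := by omega
  rw [hβm] at *
  rw [key m α k hα hk, Fc_dual]
  congr 1
  apply Finset.sum_congr rfl
  intro l hl
  have hlm := Finset.mem_Icc.mp hl
  have : m = (m - l) + l := by omega
  rw [this, key (m - l) α l hα hlm.1]
  rw [← this]
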